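/- Fix s ∈ ℂ. Let R₁ = (a₁, b₁; c₁, d₁) and R₂ = (a₂, b₂; c₂, d₂) be 2×2 integer matrices with nonzero determinant such that R₁, R₂ and R₁R₂ each satisfy: c > 0 or (c = 0 and a, d > 0). Let φ be holomorphic on ℂ ∖ (−∞, r] with a₁ − c₁·r > 0, suppose a₂ − c₂·r₁ > 0 where r₁ = max{(d₁r − b₁)/(a₁ − c₁r), −d₁/c₁} is the branching point of φ|_s R₁, and suppose the first-row condition a − c·r > 0 also holds for R₁R₂ = (a, b; c, d). Then (φ|_s R₁)|_s R₂ = φ|_s (R₁R₂) on the common domain of holomorphy. -/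

import Mathlib

/-- The cut `(−∞, r]` on the real axis, as a subset of `ℂ`. -/
def cut (r : ℝ) : Set ℂ := {z : ℂ | z.re ≤ r ∧ z.im = 0}

/-- The slash operator
`(φ|ₛ(a,b;c,d))(z) = |ad − bc|^s (cz + d)^{−2s} φ((az + b)/(cz + d))`. -/
noncomputable def slash (s : ℂ) (a b c d : ℤ) (φ : ℂ → ℂ) (z : ℂ) : ℂ :=
  ((|a * d - b * c| : ℤ) : ℂ) ^ s * ((c : ℂ) * z + (d : ℂ)) ^ (-(2 * s)) *
    φ (((a : ℂ) * z + (b : ℂ)) / ((c : ℂ) * z + (d : ℂ)))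

/-- The branching point of `φ|ₛ(a,b;c,d)` when `φ` has branching point `r`:
`max {(dr − b)/(a − cr), −d/c}`, the second entry being dropped if `c = 0`. -/
noncomputable def bp (a b c d : ℤ) (r : ℝ) : ℝ :=
  if c = 0 then ((d : ℝ) * r - (b : ℝ)) / (a : ℝ)
  else max (((d : ℝ) * r - (b : ℝ)) / ((a : ℝ) - (c : ℝ) * r)) (-(d : ℝ) / (c : ℝ))

lemma arg_lt_pi_of_cond {u : ℂ} (hu0 : u.im = 0 → 0 < u.re) : Complex.arg u < Real.pi := by
  refine lt_of_le_of_ne (Complex.arg_le_pi u) (fun h => ?_)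
  obtain ⟨h1, h2⟩ := Complex.arg_eq_pi_iff.mp h
  linarith [hu0 h2]

lemma arg_add_eq {u v : ℂ} (hu : u ≠ 0) (hv : v ≠ 0)
    (hside : (0 ≤ u.im ∧ 0 ≤ v.im) ∨ (u.im ≤ 0 ∧ v.im ≤ 0))
    (hu0 : u.im = 0 → 0 < u.re) (hv0 : v.im = 0 → 0 < v.re) :
    Complex.arg u + Complex.arg (v / u) ∈ Set.Ioc (-Real.pi) Real.pi := by
  have hq : v / u ≠ 0 := div_ne_zero hv hu
  have huv : u * (v / u) = v := by field_simp
  have hang := Complex.arg_mul_coe_angle hu hq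
  rw [huv, ← Real.Angle.coe_add] at hang
  obtain ⟨k, hk⟩ := Real.Angle.angle_eq_iff_two_pi_dvd_sub.mp hang
  have hπ := Real.pi_pos
  have hq1 : -Real.pi < Complex.arg (v / u) := Complex.neg_pi_lt_arg _
  have hq2 : Complex.arg (v / u) ≤ Real.pi := Complex.arg_le_pi _
  have hu2 : Complex.arg u < Real.pi := arg_lt_pi_of_cond hu0
  have hv2 : Complex.arg v < Real.pi := arg_lt_pi_of_cond hv0
  have hu1 : -Real.pi < Complex.arg u := Complex.neg_pi_lt_arg _
  have hv1 : -Real.pi < Complex.arg v := Complex.neg_pi_lt_arg _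
  suffices h : Complex.arg v = Complex.arg u + Complex.arg (v / u) by
    rw [← h]; exact ⟨hv1, Complex.arg_le_pi v⟩
  have hk0 : k = 0 := by
    have hbound : -(2 * Real.pi) < 2 * Real.pi * (k : ℝ) ∧
        2 * Real.pi * (k : ℝ) < 2 * Real.pi := by
      rcases hside with ⟨h1, h2⟩ | ⟨h1, h2⟩
      · have hu3 : 0 ≤ Complex.arg u := Complex.arg_nonneg_iff.mpr h1
        have hv3 : 0 ≤ Complex.arg v := Complex.arg_nonneg_iff.mpr h2
        constructor <;> linarith [hk]
      · have hu3 : Complex.arg u ≤ 0 := by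
          rcases lt_or_eq_of_le h1 with hlt | heq
          · exact (Complex.arg_neg_iff.mpr hlt).le
          · exact le_of_eq (Complex.arg_eq_zero_iff.mpr ⟨(hu0 heq).le, heq⟩)
        have hv3 : Complex.arg v ≤ 0 := by
          rcases lt_or_eq_of_le h2 with hlt | heq
          · exact (Complex.arg_neg_iff.mpr hlt).le
          · exact le_of_eq (Complex.arg_eq_zero_iff.mpr ⟨(hv0 heq).le, heq⟩)
        constructor <;> linarith [hk]
    have h1 : (-1 : ℝ) < (k : ℝ) := by nlinarith [hbound.1]
    have h2 : (k : ℝ) < 1 := by nlinarith [hbound.2]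
    have h1' : (-1 : ℤ) < k := by exact_mod_cast h1
    have h2' : k < 1 := by exact_mod_cast h2
    omega
  rw [hk0] at hk
  push_cast at hk
  linarith [hk]

lemma cpow_div_split {u v : ℂ} (hu : u ≠ 0) (hv : v ≠ 0)
    (hside : (0 ≤ u.im ∧ 0 ≤ v.im) ∨ (u.im ≤ 0 ∧ v.im ≤ 0))
    (hu0 : u.im = 0 → 0 < u.re) (hv0 : v.im = 0 → 0 < v.re) (t : ℂ) :
    v ^ t = u ^ t * (v / u) ^ t := by
  have hq : v / u ≠ 0 := div_ne_zero hv hu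
  have huv : u * (v / u) = v := by field_simp
  have harg := arg_add_eq hu hv hside hu0 hv0
  calc v ^ t = (u * (v / u)) ^ t := by rw [huv]
    _ = u ^ t * (v / u) ^ t := by
        rw [Complex.cpow_def_of_ne_zero (by rw [huv]; exact hv),
          Complex.cpow_def_of_ne_zero hu, Complex.cpow_def_of_ne_zero hq,
          Complex.log_mul hu hq harg, add_mul, Complex.exp_add]

lemma pos_of_bp_lt {a b c d : ℤ} {r' x : ℝ}
    (hG : 0 < c ∨ (c = 0 ∧ 0 < a ∧ 0 < d)) (hx : bp a b c d r' < x) :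
    0 < (c : ℝ) * x + d := by
  rcases hG with hc | ⟨hc, _, hd⟩
  · have hc' : (0 : ℝ) < c := by exact_mod_cast hc
    rw [bp, if_neg (by omega)] at hx
    have h2 : -(d : ℝ) / c < x := lt_of_le_of_lt (le_max_right _ _) hx
    rw [div_lt_iff₀ hc'] at h2
    nlinarith
  · have hd' : (0 : ℝ) < d := by exact_mod_cast hd
    rw [hc]; push_cast; linarith

lemma lin_cond (a b c d : ℤ) (r' M : ℝ) (z : ℂ)
    (hG : 0 < c ∨ (c = 0 ∧ 0 < a ∧ 0 < d))
    (hM : bp a b c d r' ≤ M) (hz : z.im = 0 → M < z.re) :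
    ((c : ℂ) * z + (d : ℂ)).im = (c : ℝ) * z.im ∧
      (((c : ℂ) * z + (d : ℂ)).im = 0 → 0 < ((c : ℂ) * z + (d : ℂ)).re) := by
  have him : ((c : ℂ) * z + (d : ℂ)).im = (c : ℝ) * z.im := by simp
  refine ⟨him, fun h => ?_⟩
  have hre : ((c : ℂ) * z + (d : ℂ)).re = (c : ℝ) * z.re + d := by simp
  rw [him] at h
  rw [hre]
  rcases mul_eq_zero.mp h with hc | hzim
  · have hc0 : c = 0 := by exact_mod_cast hc
    rcases hG with h' | ⟨_, _, hd⟩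
    · omega
    · rw [hc0]; push_cast; simpa using (by exact_mod_cast hd : (0 : ℝ) < (d : ℝ))
  · exact pos_of_bp_lt hG (lt_of_le_of_lt hM (hz hzim))

lemma int_abs_cpow (m n : ℤ) (s : ℂ) :
    ((|m| * |n| : ℤ) : ℂ) ^ s = ((|m| : ℤ) : ℂ) ^ s * ((|n| : ℤ) : ℂ) ^ s := by
  rw [show ((|m| * |n| : ℤ) : ℂ) = (((|m| : ℤ) : ℝ) : ℂ) * (((|n| : ℤ) : ℝ) : ℂ) by
    norm_cast]
  rw [Complex.mul_cpow_ofReal_nonneg (by positivity) (by positivity)]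
  norm_cast

theorem slash_mul (s : ℂ) (r : ℝ) (φ : ℂ → ℂ)
    (a₁ b₁ c₁ d₁ a₂ b₂ c₂ d₂ : ℤ)
    (hφ : DifferentiableOn ℂ φ (cut r)ᶜ)
    (hdet₁ : a₁ * d₁ - b₁ * c₁ ≠ 0) (hdet₂ : a₂ * d₂ - b₂ * c₂ ≠ 0)
    (hG₁ : 0 < c₁ ∨ (c₁ = 0 ∧ 0 < a₁ ∧ 0 < d₁))
    (hG₂ : 0 < c₂ ∨ (c₂ = 0 ∧ 0 < a₂ ∧ 0 < d₂))
    (hG₁₂ : 0 < c₁ * a₂ + d₁ * c₂ ∨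
      (c₁ * a₂ + d₁ * c₂ = 0 ∧ 0 < a₁ * a₂ + b₁ * c₂ ∧ 0 < c₁ * b₂ + d₁ * d₂))
    (h₁ : (c₁ : ℝ) * r < (a₁ : ℝ))
    (h₂ : (c₂ : ℝ) * bp a₁ b₁ c₁ d₁ r < (a₂ : ℝ))
    (h₁₂ : ((c₁ * a₂ + d₁ * c₂ : ℤ) : ℝ) * r < ((a₁ * a₂ + b₁ * c₂ : ℤ) : ℝ)) :
    ∀ z ∉ cut (max (bp a₂ b₂ c₂ d₂ (bp a₁ b₁ c₁ d₁ r))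
        (bp (a₁ * a₂ + b₁ * c₂) (a₁ * b₂ + b₁ * d₂)
          (c₁ * a₂ + d₁ * c₂) (c₁ * b₂ + d₁ * d₂) r)),
      slash s a₂ b₂ c₂ d₂ (slash s a₁ b₁ c₁ d₁ φ) z =
        slash s (a₁ * a₂ + b₁ * c₂) (a₁ * b₂ + b₁ * d₂)
          (c₁ * a₂ + d₁ * c₂) (c₁ * b₂ + d₁ * d₂) φ z := by
  intro z hz
  have hz' : z.im = 0 → max (bp a₂ b₂ c₂ d₂ (bp a₁ b₁ c₁ d₁ r))
      (bp (a₁ * a₂ + b₁ * c₂) (a₁ * b₂ + b₁ * d₂)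
        (c₁ * a₂ + d₁ * c₂) (c₁ * b₂ + d₁ * d₂) r) < z.re := by
    intro h
    by_contra hle
    push_neg at hle
    exact hz ⟨hle, h⟩
  obtain ⟨himu, hu0⟩ := lin_cond a₂ b₂ c₂ d₂ (bp a₁ b₁ c₁ d₁ r) _ z hG₂
    (le_max_left _ _) hz'
  obtain ⟨himv, hv0⟩ := lin_cond (a₁ * a₂ + b₁ * c₂) (a₁ * b₂ + b₁ * d₂)
    (c₁ * a₂ + d₁ * c₂) (c₁ * b₂ + d₁ * d₂) r _ z hG₁₂ (le_max_right _ _) hz'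
  simp only [slash]
  set u : ℂ := (c₂ : ℂ) * z + (d₂ : ℂ) with hu_def
  set v : ℂ := ((c₁ * a₂ + d₁ * c₂ : ℤ) : ℂ) * z + ((c₁ * b₂ + d₁ * d₂ : ℤ) : ℂ) with hv_def
  have hu : u ≠ 0 := by
    intro h0
    have := hu0 (by rw [h0]; simp)
    rw [h0] at this
    simp at this
  have hv : v ≠ 0 := by
    intro h0
    have := hv0 (by rw [h0]; simp)
    rw [h0] at this
    simp at this
  have hc₂ : (0 : ℝ) ≤ (c₂ : ℝ) := by
    rcases hG₂ with h | h
    · exact_mod_cast h.le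
    · exact_mod_cast h.1.ge
  have hC : (0 : ℝ) ≤ ((c₁ * a₂ + d₁ * c₂ : ℤ) : ℝ) := by
    rcases hG₁₂ with h | h
    · exact_mod_cast h.le
    · exact_mod_cast h.1.ge
  have hside : (0 ≤ u.im ∧ 0 ≤ v.im) ∨ (u.im ≤ 0 ∧ v.im ≤ 0) := by
    rcases le_or_gt 0 z.im with h | h
    · left
      rw [himu, himv]
      exact ⟨mul_nonneg hc₂ h, mul_nonneg hC h⟩
    · right
      rw [himu, himv]
      exact ⟨mul_nonpos_of_nonneg_of_nonpos hc₂ h.le,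
        mul_nonpos_of_nonneg_of_nonpos hC h.le⟩
  have hq_eq : (c₁ : ℂ) * (((a₂ : ℂ) * z + (b₂ : ℂ)) / u) + (d₁ : ℂ) = v / u := by
    rw [hu_def, hv_def]
    field_simp [show (c₂ : ℂ) * z + (d₂ : ℂ) ≠ 0 from hu]
    push_cast
    field_simp [show z * (c₂ : ℂ) + (d₂ : ℂ) ≠ 0 by rw [mul_comm]; exact hu]
    ring
  have harg : ((a₁ : ℂ) * (((a₂ : ℂ) * z + (b₂ : ℂ)) / u) + (b₁ : ℂ)) /
      ((c₁ : ℂ) * (((a₂ : ℂ) * z + (b₂ : ℂ)) / u) + (d₁ : ℂ)) =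
      (((a₁ * a₂ + b₁ * c₂ : ℤ) : ℂ) * z + ((a₁ * b₂ + b₁ * d₂ : ℤ) : ℂ)) / v := by
    have h5 : (a₁ : ℂ) * (((a₂ : ℂ) * z + (b₂ : ℂ)) / u) + (b₁ : ℂ) =
        (((a₁ * a₂ + b₁ * c₂ : ℤ) : ℂ) * z + ((a₁ * b₂ + b₁ * d₂ : ℤ) : ℂ)) / u := by
      rw [hu_def]
      field_simp [show (c₂ : ℂ) * z + (d₂ : ℂ) ≠ 0 from hu]
      push_cast
      field_simp [show z * (c₂ : ℂ) + (d₂ : ℂ) ≠ 0 by rw [mul_comm]; exact hu]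
      ring
    rw [hq_eq, h5]
    rw [div_div_div_eq]
    rw [mul_comm ((((a₁ * a₂ + b₁ * c₂ : ℤ) : ℂ)) * z + ((a₁ * b₂ + b₁ * d₂ : ℤ) : ℂ)) u,
      mul_div_mul_left _ _ hu]
  have hpow := cpow_div_split hu hv hside hu0 hv0 (-(2 * s))
  rw [harg, hq_eq, hpow]
  rw [show |(a₁ * a₂ + b₁ * c₂) * (c₁ * b₂ + d₁ * d₂) -
      (a₁ * b₂ + b₁ * d₂) * (c₁ * a₂ + d₁ * c₂)| =
      |a₂ * d₂ - b₂ * c₂| * |a₁ * d₁ - b₁ * c₁| from by rw [← abs_mul]; congr 1; ring]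
  rw [int_abs_cpow]
  ring
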